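/- Let A be a finite nonempty set, Q¹, Q² : A → ℝ, and α > 0. Let π¹ and π² be the Boltzmann policies at temperature α induced by Q¹ and Q². Then D_KL(π¹‖π²) ≤ 2 · max_{a∈A} |Q¹(a) − Q²(a)| / α. -/

import Mathlib

open Finset Real

/-- The Boltzmann policy at temperature `α` induced by `Q : A → ℝ`:
`π(a) = exp(Q(a)/α) / ∑_b exp(Q(b)/α)`. -/
noncomputable def boltzmann {A : Type*} [Fintype A] (Q : A → ℝ) (α : ℝ) (a : A) : ℝ :=
  Real.exp (Q a / α) / ∑ b, Real.exp (Q b / α)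

/-- KL divergence between two probability distributions on a finite set:
`D_KL(p‖q) = ∑_a p(a)·log(p(a)/q(a))`. -/
noncomputable def klDiv {A : Type*} [Fintype A] (p q : A → ℝ) : ℝ :=
  ∑ a, p a * Real.log (p a / q a)

/-- KL bound for Boltzmann policies at a shared temperature `α > 0`:
`D_KL(π¹‖π²) ≤ 2·max_a |Q¹(a) − Q²(a)| / α`. -/
theorem boltzmann_kl_le {A : Type*} [Fintype A] [Nonempty A]
    (Q1 Q2 : A → ℝ) (α : ℝ) (hα : 0 < α) :
    klDiv (boltzmann Q1 α) (boltzmann Q2 α) ≤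
      2 * (Finset.univ.sup' Finset.univ_nonempty fun a => |Q1 a - Q2 a|) / α := by
  set M := Finset.univ.sup' Finset.univ_nonempty fun a => |Q1 a - Q2 a| with hMdef
  have hMle : ∀ a : A, |Q1 a - Q2 a| ≤ M := fun a =>
    Finset.le_sup' (fun a => |Q1 a - Q2 a|) (Finset.mem_univ a)
  set S1 := ∑ b, Real.exp (Q1 b / α) with hS1def
  set S2 := ∑ b, Real.exp (Q2 b / α) with hS2def
  have hS1 : 0 < S1 := Finset.sum_pos (fun b _ => Real.exp_pos _) Finset.univ_nonempty
  have hS2 : 0 < S2 := Finset.sum_pos (fun b _ => Real.exp_pos _) Finset.univ_nonempty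
  have hlog : Real.log S2 - Real.log S1 ≤ M / α := by
    have h : S2 ≤ Real.exp (M / α) * S1 := by
      rw [hS2def, hS1def, Finset.mul_sum]
      apply Finset.sum_le_sum
      intro b _
      rw [← Real.exp_add]
      apply Real.exp_le_exp.2
      have h1 : Q2 b - Q1 b ≤ M := (le_abs_self _).trans ((abs_sub_comm (Q2 b) (Q1 b) ▸ hMle b))
      have h2 : (Q2 b - Q1 b) / α ≤ M / α := by gcongr
      rw [sub_div] at h2
      linarith
    have := Real.log_le_log hS2 h
    rw [Real.log_mul (Real.exp_ne_zero _) hS1.ne', Real.log_exp] at this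
    linarith
  have hterm : ∀ a : A,
      boltzmann Q1 α a * Real.log (boltzmann Q1 α a / boltzmann Q2 α a)
        ≤ boltzmann Q1 α a * (2 * M / α) := by
    intro a
    have hb1 : 0 < boltzmann Q1 α a := div_pos (Real.exp_pos _) hS1
    apply mul_le_mul_of_nonneg_left _ hb1.le
    have hratio : boltzmann Q1 α a / boltzmann Q2 α a
        = Real.exp (Q1 a / α) / Real.exp (Q2 a / α) * (S2 / S1) := by
      unfold boltzmann
      rw [← hS1def, ← hS2def]
      field_simp
    rw [hratio, Real.log_mul (by positivity) (by positivity),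
      Real.log_div (Real.exp_ne_zero _) (Real.exp_ne_zero _),
      Real.log_div hS2.ne' hS1.ne', Real.log_exp, Real.log_exp]
    have h1 : Q1 a - Q2 a ≤ M := (le_abs_self _).trans (hMle a)
    have h2 : (Q1 a - Q2 a) / α ≤ M / α := by gcongr
    rw [sub_div] at h2
    have hM0 : 0 ≤ M := le_trans (abs_nonneg _) (hMle (Classical.arbitrary A))
    have : 2 * M / α = M / α + M / α := by ring
    rw [this]
    linarith
  have hsum1 : ∑ a, boltzmann Q1 α a = 1 := by
    unfold boltzmann
    rw [← Finset.sum_div, ← hS1def, div_self hS1.ne']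
  calc klDiv (boltzmann Q1 α) (boltzmann Q2 α)
      ≤ ∑ a, boltzmann Q1 α a * (2 * M / α) := Finset.sum_le_sum fun a _ => hterm a
    _ = (∑ a, boltzmann Q1 α a) * (2 * M / α) := by rw [Finset.sum_mul]
    _ = 2 * M / α := by rw [hsum1, one_mul]
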